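/- Let G be a dense additive subgroup of a complete topological vector space V over ℝ. Then the restriction map r_G, sending φ ∈ Φ(G) to φ↾G, is a group isomorphism from Φ(G) onto the group Aut(G) of topological group automorphisms of G, where Φ(G) = {φ : φ is a linear homeomorphism of V onto itself with φ(G) = G}. -/

import Mathlib

set_option linter.unusedSectionVars false

open Set Topology

section Aux

variable {V : Type*} [AddCommGroup V] [Module ℝ V] [UniformSpace V]
    [IsUniformAddGroup V] [ContinuousSMul ℝ V] [CompleteSpace V] [T2Space V]
    {G : AddSubgroup V} (hG : Dense (G : Set V))
include hG

theorem myDR : DenseRange ((↑) : G → V) := by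
  rw [DenseRange, Subtype.range_coe_subtype]; exact hG

noncomputable def myDI : IsDenseInducing ((↑) : G → V) :=
  isUniformEmbedding_subtype_val.isUniformInducing.isDenseInducing (myDR hG)

/-- Extension of a continuous hom `G →+ V` to `V → V`. -/
noncomputable def myExt (h : G →+ V) : V → V := (myDI hG).extend h

theorem myExt_uc (h : G →+ V) (hc : Continuous h) : UniformContinuous (myExt hG h) :=
  uniformContinuous_uniformly_extend isUniformEmbedding_subtype_val.isUniformInducing
    (myDR hG) (uniformContinuous_addMonoidHom_of_continuous hc)

theorem myExt_cont (h : G →+ V) (hc : Continuous h) : Continuous (myExt hG h) :=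
  (myExt_uc hG h hc).continuous

theorem myExt_eq (h : G →+ V) (hc : Continuous h) (g : G) : myExt hG h (g : V) = h g :=
  (myDI hG).extend_eq hc g

theorem myExt_add (h : G →+ V) (hc : Continuous h) (x y : V) :
    myExt hG h (x + y) = myExt hG h x + myExt hG h y := by
  have hd : Dense ((G : Set V) ×ˢ (G : Set V)) := hG.prod hG
  have h1 : Continuous fun p : V × V => myExt hG h (p.1 + p.2) :=
    (myExt_cont hG h hc).comp continuous_add
  have h2 : Continuous fun p : V × V => myExt hG h p.1 + myExt hG h p.2 :=
    ((myExt_cont hG h hc).comp continuous_fst).add ((myExt_cont hG h hc).comp continuous_snd)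
  have := h1.ext_on hd h2 ?_
  · exact congrFun this (x, y)
  · rintro ⟨x, y⟩ ⟨hx, hy⟩
    have : ((⟨x, hx⟩ : G) : V) + ((⟨y, hy⟩ : G) : V) = ((⟨x, hx⟩ + ⟨y, hy⟩ : G) : V) := rfl
    simp only []
    rw [show (x + y : V) = ((⟨x, hx⟩ + ⟨y, hy⟩ : G) : V) from rfl,
      myExt_eq hG h hc, myExt_eq hG h hc ⟨x, hx⟩, myExt_eq hG h hc ⟨y, hy⟩, map_add]

end Aux

section Aux2

variable {V : Type*} [AddCommGroup V] [Module ℝ V] [UniformSpace V]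
    [IsUniformAddGroup V] [ContinuousSMul ℝ V] [CompleteSpace V] [T2Space V]
    {G : AddSubgroup V} (hG : Dense (G : Set V))

/-- the hom `G →+ V` attached to `f : G ≃+ G`. -/
def homOf (f : G ≃+ G) : G →+ V := G.subtype.comp f.toAddMonoidHom

theorem homOf_cont {f : G ≃+ G} (hf : Continuous f) : Continuous (homOf f) :=
  continuous_subtype_val.comp hf

variable (f : G ≃+ G) (hf : Continuous f) (hf' : Continuous f.symm)

include hG f hf in
noncomputable def bigExt : V →L[ℝ] V := by
  refine AddMonoidHom.toRealLinearMap (AddMonoidHom.mk' (myExt hG (homOf f)) ?_) ?_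
  · exact myExt_add hG _ (homOf_cont hf)
  · exact myExt_cont hG _ (homOf_cont hf)

theorem bigExt_coe (g : G) : bigExt hG f hf (g : V) = (f g : V) :=
  myExt_eq hG _ (homOf_cont hf) g

theorem bigExt_inv (x : V) : bigExt hG f.symm hf' (bigExt hG f hf x) = x := by
  have h1 : Continuous fun x => bigExt hG f.symm hf' (bigExt hG f hf x) :=
    (bigExt hG f.symm hf').continuous.comp (bigExt hG f hf).continuous
  have := h1.ext_on hG continuous_id ?_
  · exact congrFun this x
  · intro x hx
    show bigExt hG f.symm hf' (bigExt hG f hf ((⟨x, hx⟩ : G) : V)) = x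
    rw [bigExt_coe hG f hf, bigExt_coe hG f.symm hf', AddEquiv.symm_apply_apply]

noncomputable def bigEquiv : V ≃L[ℝ] V :=
  ContinuousLinearEquiv.equivOfInverse (bigExt hG f hf) (bigExt hG f.symm hf')
    (bigExt_inv hG f hf hf') (by
      intro x; simpa using bigExt_inv hG f.symm hf' (by simpa using hf) x)

theorem bigEquiv_image : (bigEquiv hG f hf hf') '' (G : Set V) = (G : Set V) := by
  ext y
  constructor
  · rintro ⟨x, hx, rfl⟩
    have : (bigEquiv hG f hf hf') x = (f ⟨x, hx⟩ : V) := bigExt_coe hG f hf ⟨x, hx⟩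
    rw [this]; exact (f ⟨x, hx⟩).2
  · intro hy
    refine ⟨(f.symm ⟨y, hy⟩ : V), (f.symm ⟨y, hy⟩).2, ?_⟩
    have : (bigEquiv hG f hf hf') (f.symm ⟨y, hy⟩ : V) = (f (f.symm ⟨y, hy⟩) : V) :=
      bigExt_coe hG f hf _
    rw [this, AddEquiv.apply_symm_apply]

end Aux2

section Aux3

variable {V : Type*} [AddCommGroup V] [Module ℝ V] [UniformSpace V]
    [IsUniformAddGroup V] [ContinuousSMul ℝ V] [CompleteSpace V] [T2Space V]
    {G : AddSubgroup V}

def restrictAut (φ : V ≃L[ℝ] V) (hφ : φ '' (G : Set V) = (G : Set V)) : G ≃+ G where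
  toFun g := ⟨φ g, by
    have : φ (g : V) ∈ φ '' (G : Set V) := Set.mem_image_of_mem _ g.2
    rwa [hφ] at this⟩
  invFun g := ⟨φ.symm g, by
    obtain ⟨x, hx, hxg⟩ : (g : V) ∈ φ '' (G : Set V) := by rw [hφ]; exact g.2
    rw [← hxg, ContinuousLinearEquiv.symm_apply_apply]; exact hx⟩
  left_inv g := by ext; simp
  right_inv g := by ext; simp
  map_add' a b := by ext; simp

theorem restrictAut_cont (φ : V ≃L[ℝ] V) (hφ : φ '' (G : Set V) = (G : Set V)) :
    Continuous (restrictAut φ hφ) :=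
  (φ.continuous.comp continuous_subtype_val).subtype_mk _

theorem restrictAut_symm_cont (φ : V ≃L[ℝ] V) (hφ : φ '' (G : Set V) = (G : Set V)) :
    Continuous (restrictAut φ hφ).symm :=
  (φ.symm.continuous.comp continuous_subtype_val).subtype_mk _

end Aux3

theorem stmt_1 {V : Type*} [AddCommGroup V] [Module ℝ V] [UniformSpace V]
    [IsUniformAddGroup V] [ContinuousSMul ℝ V] [CompleteSpace V] [T2Space V]
    (G : AddSubgroup V) (hG : Dense (G : Set V)) :
    ∃ e : {φ : V ≃L[ℝ] V // φ '' (G : Set V) = (G : Set V)} ≃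
        {f : G ≃+ G // Continuous f ∧ Continuous f.symm},
      ∀ (φ : {φ : V ≃L[ℝ] V // φ '' (G : Set V) = (G : Set V)}) (g : G),
        ((e φ).1 g : V) = (φ.1 : V ≃L[ℝ] V) (g : V) := by
  refine ⟨⟨fun φ => ⟨restrictAut φ.1 φ.2, restrictAut_cont _ _, restrictAut_symm_cont _ _⟩,
    fun F => ⟨bigEquiv hG F.1 F.2.1 F.2.2, bigEquiv_image hG F.1 F.2.1 F.2.2⟩, ?_, ?_⟩,
    fun φ g => rfl⟩
  · rintro ⟨φ, hφ⟩
    refine Subtype.ext (ContinuousLinearEquiv.ext (funext fun x => ?_))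
    have h1 : Continuous fun x =>
        (bigEquiv hG (restrictAut φ hφ) (restrictAut_cont _ _) (restrictAut_symm_cont _ _)) x :=
      (bigEquiv hG _ _ _).continuous
    have := h1.ext_on hG φ.continuous ?_
    · exact congrFun this x
    · intro y hy
      exact bigExt_coe hG (restrictAut φ hφ) (restrictAut_cont _ _) ⟨y, hy⟩
  · rintro ⟨f, hf, hf'⟩
    refine Subtype.ext ?_
    refine AddEquiv.ext fun g => Subtype.ext ?_
    show (bigEquiv hG f hf hf') (g : V) = (f g : V)
    exact bigExt_coe hG f hf g
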